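/- For every uncovered request r_i with suns(i)≠∅, the radius of the parent is at least twice the sum of the radii of its children: ρ(i) ≥ 2·Σ_{j∈suns(i)} ρ(j). -/
import Mathlib


open Finset

/-- A replica is a pair `(v, t)` of a network node and a time. -/
abbrev Replica : Type := ℕ × ℕ

/-- A (directed) grid edge is a pair of replicas. -/
abbrev GEdge : Type := Replica × Replica

/-- Horizontal directed edge `((v,t),(v+1,t))`. -/
def isHoriz (e : GEdge) : Prop := e.2 = (e.1.1 + 1, e.1.2)

/-- Vertical arc `((v,t),(v,t+1))`. -/
def isArc (e : GEdge) : Prop := e.2 = (e.1.1, e.1.2 + 1)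

def isGridEdge (e : GEdge) : Prop := isHoriz e ∨ isArc e

/-- The quarter ball `B(r,ρ)`: replicas `(u,s)` with `u ≤ v`, `s ≤ t` and
`(v−u)+(t−s) ≤ ρ`. -/
def qball (r : Replica) (ρ : ℕ) : Set Replica :=
  {q | q.1 ≤ r.1 ∧ q.2 ≤ r.2 ∧ (r.1 - q.1) + (r.2 - q.2) ≤ ρ}

/-- Grid edges with both endpoints in the quarter ball `B(r,ρ)`. -/
def ballEdge (r : Replica) (ρ : ℕ) (e : GEdge) : Prop :=
  isGridEdge e ∧ e.1 ∈ qball r ρ ∧ e.2 ∈ qball r ρ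

/-- Two quarter balls are edge-disjoint if they share no grid edge. -/
def BallsEdgeDisjoint (r : Replica) (ρ : ℕ) (r' : Replica) (ρ' : ℕ) : Prop :=
  ∀ e : GEdge, ¬ (ballEdge r ρ e ∧ ballEdge r' ρ' e)

/-- The square `Sq(r,ρ) = [v−ρ,v] × [t−ρ,t]`. -/
def SqRect (r : Replica) (ρ : ℕ) : Set Replica :=
  {q | r.1 - ρ ≤ q.1 ∧ q.1 ≤ r.1 ∧ r.2 - ρ ≤ q.2 ∧ q.2 ≤ r.2}

/-- Directed `L∞` distance `d∞(q,r)`: `max(v−u, t−s)` if `u ≤ v` and `s ≤ t`,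
and `∞` otherwise. -/
def distInf (q r : Replica) : ℕ∞ :=
  if q.1 ≤ r.1 ∧ q.2 ≤ r.2 then ((max (r.1 - q.1) (r.2 - q.2) : ℕ) : ℕ∞) else ⊤

/-- The replicas of an edge set: `(0,0)` together with all endpoints of its edges. -/
def Repl (F : Finset GEdge) : Set Replica :=
  insert ((0, 0) : Replica) {q | ∃ e ∈ F, q = e.1 ∨ q = e.2}

/-- The arcs of the vertical path at node `u` from time `s` to time `τ`. -/
def vertPath (u s τ : ℕ) : Finset GEdge :=
  (Finset.range (τ - s)).image (fun k => ((u, s + k), (u, s + k + 1)))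

/-- The horizontal edges of the path at time `τ` from node `u` to node `w`. -/
def horizPath (τ u w : ℕ) : Finset GEdge :=
  (Finset.range (w - u)).image (fun k => ((u + k, τ), (u + k + 1, τ)))

/-- A directed path from `a` to `b` all of whose edges belong to `F`. -/
def PathIn (F : Finset GEdge) (a b : Replica) : Prop :=
  ∃ (L : ℕ) (f : ℕ → Replica), f 0 = a ∧ f L = b ∧ ∀ k < L, (f k, f (k + 1)) ∈ F

/-- An execution of Algorithm `Square` on a request sequence
`r_1 = (v 1, t 1), …, r_N = (v N, t N)` (with `t 0 = 0` and nondecreasing times).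
`sol i` is the edge set after handling request `i`; `ρ i` is the radius of
request `i`; `(u' i, s' i)` is its closest replica and `(us i, ss i)` its
serving replica.  The fields record the specification SQ1–SQ5. -/
structure SquareRun where
  N : ℕ
  v : ℕ → ℕ
  t : ℕ → ℕ
  ρ : ℕ → ℕ
  u' : ℕ → ℕ
  s' : ℕ → ℕ
  us : ℕ → ℕ
  ss : ℕ → ℕ
  sol : ℕ → Finset GEdge
  t_zero : t 0 = 0
  t_mono : ∀ i j, i ≤ j → j ≤ N → t i ≤ t j
  sol_zero : sol 0 = ∅
  /-- SQ2: `ρ i` is a lower bound on the distance from every replica of the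
  current solution (after the SQ1 additions) to `r_i`. -/
  rho_min : ∀ i, 1 ≤ i → i ≤ N →
    ∀ q ∈ Repl (sol (i - 1) ∪ vertPath 0 (t (i - 1)) (t i)),
      (ρ i : ℕ∞) ≤ distInf q (v i, t i)
  /-- SQ2: the closest replica belongs to the current solution. -/
  closest_mem : ∀ i, 1 ≤ i → i ≤ N →
    (u' i, s' i) ∈ Repl (sol (i - 1) ∪ vertPath 0 (t (i - 1)) (t i))
  /-- SQ2: the closest replica attains the radius. -/
  closest_dist : ∀ i, 1 ≤ i → i ≤ N →
    distInf (u' i, s' i) (v i, t i) = (ρ i : ℕ∞)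
  /-- SQ2: among replicas of node `u' i`, the closest replica is the latest. -/
  closest_late : ∀ i, 1 ≤ i → i ≤ N → ∀ s, s ≤ t i →
    (u' i, s) ∈ Repl (sol (i - 1) ∪ vertPath 0 (t (i - 1)) (t i)) → s ≤ s' i
  /-- SQ3: the serving replica is in the current solution and in `Sq(r_i, 5ρ i)`. -/
  serv_mem : ∀ i, 1 ≤ i → i ≤ N →
    (us i, ss i) ∈ Repl (sol (i - 1) ∪ vertPath 0 (t (i - 1)) (t i)) ∧
      (us i, ss i) ∈ SqRect (v i, t i) (5 * ρ i)
  /-- SQ3: the serving node is leftmost. -/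
  serv_min : ∀ i, 1 ≤ i → i ≤ N →
    ∀ q ∈ Repl (sol (i - 1) ∪ vertPath 0 (t (i - 1)) (t i)),
      q ∈ SqRect (v i, t i) (5 * ρ i) → us i ≤ q.1
  /-- SQ3: among those, the serving time is latest. -/
  serv_late : ∀ i, 1 ≤ i → i ≤ N →
    ∀ q ∈ Repl (sol (i - 1) ∪ vertPath 0 (t (i - 1)) (t i)),
      q ∈ SqRect (v i, t i) (5 * ρ i) → q.1 = us i → q.2 ≤ ss i
  /-- SQ1 + SQ4 + SQ5: the edges added while handling request `i`. -/
  step : ∀ i, 1 ≤ i → i ≤ N →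
    sol i = (sol (i - 1) ∪ vertPath 0 (t (i - 1)) (t i))
      ∪ vertPath (us i) (ss i) (t i) ∪ horizPath (t i) (us i) (v i)
      ∪ vertPath (us i) (t i) (t i + 4 * ρ i)

namespace SquareRun

variable (S : SquareRun)

/-- The `i`-th request replica. -/
def req (i : ℕ) : Replica := (S.v i, S.t i)

/-- The edges added in steps SQ4 and SQ5 while handling request `i`. -/
def added45 (i : ℕ) : Finset GEdge :=
  vertPath (S.us i) (S.ss i) (S.t i) ∪ horizPath (S.t i) (S.us i) (S.v i)
    ∪ vertPath (S.us i) (S.t i) (S.t i + 4 * S.ρ i)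

/-- Request `i` is covered if `v_i − u^s_i ≥ ρ(i)`. -/
def covered (i : ℕ) : Prop := S.ρ i ≤ S.v i - S.us i

def uncovered (i : ℕ) : Prop := ¬ S.covered i

/-- A feasible solution of the DMCD instance given by the requests of `S`. -/
def Feasible (F : Finset GEdge) : Prop :=
  (∀ e ∈ F, isGridEdge e) ∧
  (∀ i, 1 ≤ i → i ≤ S.N → PathIn F (0, 0) (S.req i)) ∧
  (∀ τ, τ < S.t S.N → ∃ w, ((w, τ), (w, τ + 1)) ∈ F)

/-- `S.IsParent i j` means `parent(j) = i`:  `i` is the least index greater than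
`j` such that `r_i` is uncovered and `SQball(j)`, `SQball(i)` are not
edge-disjoint. -/
def IsParent (i j : ℕ) : Prop :=
  1 ≤ j ∧ j < i ∧ i ≤ S.N ∧ S.uncovered j ∧ S.uncovered i ∧
    ¬ BallsEdgeDisjoint (S.req j) (S.ρ j) (S.req i) (S.ρ i) ∧
    ∀ k, j < k → k < i → S.uncovered k →
      BallsEdgeDisjoint (S.req j) (S.ρ j) (S.req k) (S.ρ k)

/-- A root: an uncovered request with no parent. -/
def IsRoot (i : ℕ) : Prop :=
  1 ≤ i ∧ i ≤ S.N ∧ S.uncovered i ∧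
    ∀ j, i < j → j ≤ S.N → S.uncovered j →
      BallsEdgeDisjoint (S.req i) (S.ρ i) (S.req j) (S.ρ j)

/-- `i ∈ Tree(iStar)`: one can go from `i` to `iStar` by repeatedly passing from
a child to its parent. -/
def InTree (i iStar : ℕ) : Prop :=
  Relation.ReflTransGen (fun a b => S.IsParent b a) i iStar

end SquareRun

section AuxLemmas

lemma mem_Repl_iff (F : Finset GEdge) (q : Replica) :
    q ∈ Repl F ↔ q = ((0, 0) : Replica) ∨ ∃ e ∈ F, q = e.1 ∨ q = e.2 := by
  simp [Repl, Set.mem_insert_iff, Set.mem_setOf_eq]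

lemma Repl_mono {F G : Finset GEdge} (h : F ⊆ G) : Repl F ⊆ Repl G := by
  intro q hq
  rcases (mem_Repl_iff F q).1 hq with h0 | ⟨e, he, hend⟩
  · exact (mem_Repl_iff G q).2 (Or.inl h0)
  · exact (mem_Repl_iff G q).2 (Or.inr ⟨e, h he, hend⟩)

lemma mem_vertPath {u s e : ℕ} {ed : GEdge} :
    ed ∈ vertPath u s e ↔ ∃ k, s + k + 1 ≤ e ∧ ed = ((u, s + k), (u, s + k + 1)) := by
  simp only [vertPath, Finset.mem_image, Finset.mem_range]
  constructor
  · rintro ⟨k, hk, rfl⟩; exact ⟨k, by omega, rfl⟩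
  · rintro ⟨k, hk, rfl⟩; exact ⟨k, by omega, rfl⟩

lemma mem_horizPath {τ u w : ℕ} {ed : GEdge} :
    ed ∈ horizPath τ u w ↔ ∃ k, u + k + 1 ≤ w ∧ ed = ((u + k, τ), (u + k + 1, τ)) := by
  simp only [horizPath, Finset.mem_image, Finset.mem_range]
  constructor
  · rintro ⟨k, hk, rfl⟩; exact ⟨k, by omega, rfl⟩
  · rintro ⟨k, hk, rfl⟩; exact ⟨k, by omega, rfl⟩

lemma vert_end {F : Finset GEdge} {u s e τ : ℕ} (hsub : vertPath u s e ⊆ F)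
    (h1 : s ≤ τ) (h2 : τ ≤ e) (h3 : s < e) : ((u, τ) : Replica) ∈ Repl F := by
  rcases lt_or_eq_of_le h2 with h2' | rfl
  · refine (mem_Repl_iff F _).2 (Or.inr ⟨((u, τ), (u, τ + 1)), hsub ?_, Or.inl ?_⟩)
    · exact mem_vertPath.2 ⟨τ - s, by omega, by simp; omega⟩
    · rfl
  · refine (mem_Repl_iff F _).2 (Or.inr ⟨((u, τ - 1), (u, τ)), hsub ?_, Or.inr ?_⟩)
    · exact mem_vertPath.2 ⟨τ - 1 - s, by omega, by simp; omega⟩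
    · rfl

lemma horiz_end {F : Finset GEdge} {τ u w x : ℕ} (hsub : horizPath τ u w ⊆ F)
    (h1 : u ≤ x) (h2 : x ≤ w) (h3 : u < w) : ((x, τ) : Replica) ∈ Repl F := by
  rcases lt_or_eq_of_le h2 with h2' | rfl
  · refine (mem_Repl_iff F _).2 (Or.inr ⟨((x, τ), (x + 1, τ)), hsub ?_, Or.inl ?_⟩)
    · exact mem_horizPath.2 ⟨x - u, by omega, by simp; omega⟩
    · rfl
  · refine (mem_Repl_iff F _).2 (Or.inr ⟨((x - 1, τ), (x, τ)), hsub ?_, Or.inr ?_⟩)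
    · exact mem_horizPath.2 ⟨x - 1 - u, by omega, by simp; omega⟩
    · rfl

end AuxLemmas

namespace SquareRun

variable (S : SquareRun)

/-- The replica set available when request `n` is handled (after SQ1). -/
def DecSet (n : ℕ) : Set Replica :=
  Repl (S.sol (n - 1) ∪ vertPath 0 (S.t (n - 1)) (S.t n))

lemma sol_mono : ∀ a b : ℕ, a ≤ b → b ≤ S.N → S.sol a ⊆ S.sol b := by
  intro a b
  induction b with
  | zero => intro hab _; have : a = 0 := by omega
            subst this; exact Finset.Subset.refl _
  | succ b IH =>
    intro hab hbN
    rcases Nat.lt_or_ge a (b + 1) with h | h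
    · have hsub : S.sol b ⊆ S.sol (b + 1) := by
        intro e he
        rw [S.step (b + 1) (by omega) hbN]
        simp only [Nat.add_sub_cancel, Finset.mem_union]
        tauto
      exact (IH (by omega) (by omega)).trans hsub
    · have : a = b + 1 := by omega
      subst this; exact Finset.Subset.refl _

lemma toDec {m n : ℕ} (hmn : m < n) (hnN : n ≤ S.N) :
    Repl (S.sol m) ⊆ S.DecSet n :=
  Repl_mono ((S.sol_mono m (n - 1) (by omega) (by omega)).trans Finset.subset_union_left)

lemma sol_decomp : ∀ b : ℕ, b ≤ S.N → ∀ e ∈ S.sol b, ∃ m, 1 ≤ m ∧ m ≤ b ∧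
    (e ∈ vertPath 0 (S.t (m - 1)) (S.t m) ∨ e ∈ vertPath (S.us m) (S.ss m) (S.t m) ∨
      e ∈ horizPath (S.t m) (S.us m) (S.v m) ∨
      e ∈ vertPath (S.us m) (S.t m) (S.t m + 4 * S.ρ m)) := by
  intro b
  induction b with
  | zero => intro _ e he; rw [S.sol_zero] at he; exact absurd he (Finset.notMem_empty e)
  | succ b IH =>
    intro hbN e he
    rw [S.step (b + 1) (by omega) hbN] at he
    simp only [Nat.add_sub_cancel, Finset.mem_union] at he
    rcases he with (((he | he) | he) | he) | he
    · obtain ⟨m, h1, h2, h3⟩ := IH (by omega) e he; exact ⟨m, h1, by omega, h3⟩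
    · exact ⟨b + 1, by omega, le_refl _, Or.inl (by simpa using he)⟩
    · exact ⟨b + 1, by omega, le_refl _, Or.inr (Or.inl he)⟩
    · exact ⟨b + 1, by omega, le_refl _, Or.inr (Or.inr (Or.inl he))⟩
    · exact ⟨b + 1, by omega, le_refl _, Or.inr (Or.inr (Or.inr he))⟩

lemma servfacts {m : ℕ} (h1 : 1 ≤ m) (hN : m ≤ S.N) :
    S.v m - 5 * S.ρ m ≤ S.us m ∧ S.us m ≤ S.v m ∧
      S.t m - 5 * S.ρ m ≤ S.ss m ∧ S.ss m ≤ S.t m :=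
  (S.serv_mem m h1 hN).2

lemma trailmem {m : ℕ} (h1 : 1 ≤ m) (hN : m ≤ S.N) (hρ : 1 ≤ S.ρ m) {τ : ℕ}
    (hl : S.ss m ≤ τ) (hu2 : τ ≤ S.t m + 4 * S.ρ m) :
    ((S.us m, τ) : Replica) ∈ Repl (S.sol m) := by
  have hst := S.step m h1 hN
  have hss := (S.servfacts h1 hN).2.2.2
  rcases le_or_gt (S.t m) τ with h | h
  · refine vert_end (F := S.sol m) (u := S.us m) (s := S.t m)
      (e := S.t m + 4 * S.ρ m) ?_ h hu2 (by omega)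
    intro e he; rw [hst]; simp only [Finset.mem_union]; tauto
  · refine vert_end (F := S.sol m) (u := S.us m) (s := S.ss m) (e := S.t m) ?_ hl (by omega) (by omega)
    intro e he; rw [hst]; simp only [Finset.mem_union]; tauto

lemma rowmem {m : ℕ} (h1 : 1 ≤ m) (hN : m ≤ S.N) (hρ : 1 ≤ S.ρ m) {w : ℕ}
    (hl : S.us m ≤ w) (hu2 : w ≤ S.v m) :
    ((w, S.t m) : Replica) ∈ Repl (S.sol m) := by
  have hst := S.step m h1 hN
  have hss := (S.servfacts h1 hN).2.2.2
  rcases lt_or_eq_of_le ((S.servfacts h1 hN).2.1) with h | h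
  · refine horiz_end (F := S.sol m) (u := S.us m) (w := S.v m) (τ := S.t m) ?_ hl hu2 h
    intro e he; rw [hst]; simp only [Finset.mem_union]; tauto
  · have : w = S.us m := by omega
    subst this
    exact S.trailmem h1 hN hρ hss (by omega)

lemma rho_min_nat {n a b : ℕ} (h1 : 1 ≤ n) (hN : n ≤ S.N)
    (h : ((a, b) : Replica) ∈ S.DecSet n) (hav : a ≤ S.v n) (hbt : b ≤ S.t n) :
    S.ρ n ≤ max (S.v n - a) (S.t n - b) := by
  have hh := S.rho_min n h1 hN (a, b) h
  rw [distInf, if_pos ⟨hav, hbt⟩] at hh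
  exact_mod_cast hh

lemma closest_nat {n : ℕ} (h1 : 1 ≤ n) (hN : n ≤ S.N) :
    S.u' n ≤ S.v n ∧ S.s' n ≤ S.t n ∧
      max (S.v n - S.u' n) (S.t n - S.s' n) = S.ρ n := by
  have hh := S.closest_dist n h1 hN
  rw [distInf] at hh
  split at hh
  · next hcond => exact ⟨hcond.1, hcond.2, by exact_mod_cast hh⟩
  · next hcond => exact absurd hh (by simp)

lemma creator {n a b : ℕ} (h1 : 1 ≤ n) (hN : n ≤ S.N)
    (hmem : ((a, b) : Replica) ∈ S.DecSet n) (ha : 1 ≤ a) :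
    ∃ m, 1 ≤ m ∧ m < n ∧ m ≤ S.N ∧ 1 ≤ S.ρ m ∧
      ((a, b) : Replica) ∈ Repl (S.sol m) ∧
      ((b = S.t m ∧ S.us m ≤ a ∧ a ≤ S.v m) ∨
        (a = S.us m ∧ S.ss m ≤ b ∧ b ≤ S.t m + 4 * S.ρ m)) := by
  rcases (mem_Repl_iff _ _).1 hmem with h0 | ⟨e, he, hend⟩
  · rw [Prod.ext_iff] at h0; simp at h0; omega
  · rcases Finset.mem_union.1 he with he | he
    swap
    · rcases mem_vertPath.1 he with ⟨k, hk, rfl⟩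
      rcases hend with h | h <;> (rw [Prod.ext_iff] at h; simp at h; omega)
    obtain ⟨m, hm1, hm2, hcase⟩ := S.sol_decomp (n - 1) (by omega) e he
    have hmN : m ≤ S.N := by omega
    have hserv := S.servfacts hm1 hmN
    have hmemm : ∀ (hρ : True), e ∈ S.sol m → ((a, b) : Replica) ∈ Repl (S.sol m) := by
      intro _ hesol
      exact (mem_Repl_iff _ _).2 (Or.inr ⟨e, hesol, hend⟩)
    have hst := S.step m hm1 hmN
    rcases hcase with hc | hc | hc | hc
    · -- SQ1 edges have node 0
      rcases mem_vertPath.1 hc with ⟨k, hk, rfl⟩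
      rcases hend with h | h <;> (rw [Prod.ext_iff] at h; simp at h; omega)
    · -- SQ4 vertical
      rcases mem_vertPath.1 hc with ⟨k, hk, rfl⟩
      have hρm : 1 ≤ S.ρ m := by
        by_contra h0
        have : S.ρ m = 0 := by omega
        omega
      have hesol : ((S.us m, S.ss m + k), (S.us m, S.ss m + k + 1)) ∈ S.sol m := by
        rw [hst]; simp only [Finset.mem_union]; tauto
      refine ⟨m, hm1, by omega, hmN, hρm, hmemm trivial hesol, Or.inr ?_⟩
      rcases hend with h | h <;> (rw [Prod.ext_iff] at h; simp at h; constructor <;> omega)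
    · -- SQ4 horizontal
      rcases mem_horizPath.1 hc with ⟨k, hk, rfl⟩
      have hρm : 1 ≤ S.ρ m := by
        by_contra h0
        have h5 : S.ρ m = 0 := by omega
        omega
      have hesol : ((S.us m + k, S.t m), (S.us m + k + 1, S.t m)) ∈ S.sol m := by
        rw [hst]; simp only [Finset.mem_union]; tauto
      refine ⟨m, hm1, by omega, hmN, hρm, hmemm trivial hesol, Or.inl ?_⟩
      rcases hend with h | h <;> (rw [Prod.ext_iff] at h; simp at h; constructor <;> omega)
    · -- SQ5 vertical
      rcases mem_vertPath.1 hc with ⟨k, hk, rfl⟩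
      have hρm : 1 ≤ S.ρ m := by omega
      have hesol : ((S.us m, S.t m + k), (S.us m, S.t m + k + 1)) ∈ S.sol m := by
        rw [hst]; simp only [Finset.mem_union]; tauto
      refine ⟨m, hm1, by omega, hmN, hρm, hmemm trivial hesol, Or.inr ?_⟩
      rcases hend with h | h <;> (rw [Prod.ext_iff] at h; simp at h; constructor <;> omega)

end SquareRun

/-- The radius of an uncovered parent is at least twice the sum of the radii of
its children: `ρ(i) ≥ 2·Σ_{j∈suns(i)} ρ(j)`. -/
theorem parent_radius_ge_children (S : SquareRun) (i : ℕ)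
    (hi1 : 1 ≤ i) (hiN : i ≤ S.N) (hu : S.uncovered i)
    (suns : Finset ℕ) (hsuns : ∀ j, j ∈ suns ↔ S.IsParent i j)
    (hne : suns.Nonempty) :
    2 * ∑ j ∈ suns, S.ρ j ≤ S.ρ i := by
  classical
  have hmono := S.t_mono
  -- ====================== per-child facts ======================
  have CF : ∀ j ∈ suns, (1 ≤ j ∧ j < i ∧ j ≤ S.N) ∧ 1 ≤ S.ρ j ∧ 1 ≤ S.ρ i ∧
      S.v i + 1 ≤ S.v j ∧ S.v j + 1 ≤ S.v i + S.ρ j ∧ S.t j ≤ S.t i ∧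
      S.t i + 1 ≤ S.t j + S.ρ i ∧ S.v i + 1 ≤ S.us j ∧
      S.us j ≤ S.u' j ∧ S.u' j ≤ S.v j ∧ S.s' j + S.ρ j = S.t j := by
    intro j hj
    obtain ⟨hj1, hji, -, huj, hui, hmeet, hminl⟩ := (hsuns j).mp hj
    have hjN : j ≤ S.N := by omega
    simp only [BallsEdgeDisjoint, not_forall, not_not] at hmeet
    obtain ⟨e, hbj, hbi⟩ := hmeet
    obtain ⟨hgrid, hpj, hqj⟩ := hbj
    obtain ⟨-, hpi, hqi⟩ := hbi
    simp [SquareRun.req, qball] at hpj hqj hpi hqi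
    have hedge : e.1.1 + e.1.2 + 1 = e.2.1 + e.2.2 ∧ e.1.1 ≤ e.2.1 ∧ e.1.2 ≤ e.2.2 := by
      rcases hgrid with h | h
      · have h' : e.2 = (e.1.1 + 1, e.1.2) := h
        have h1 : e.2.1 = e.1.1 + 1 := by rw [h']
        have h2 : e.2.2 = e.1.2 := by rw [h']
        omega
      · have h' : e.2 = (e.1.1, e.1.2 + 1) := h
        have h1 : e.2.1 = e.1.1 := by rw [h']
        have h2 : e.2.2 = e.1.2 + 1 := by rw [h']
        omega
    have htji : S.t j ≤ S.t i := hmono j i (by omega) hiN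
    have hρj : 1 ≤ S.ρ j := by omega
    have hρi : 1 ≤ S.ρ i := by omega
    have hMEET : S.t i + 1 ≤ S.t j + S.ρ i := by omega
    have hx1 : S.v j + 1 ≤ S.v i + S.ρ j := by omega
    have hserv := S.servfacts hj1 hjN
    have hvj : ((S.v j, S.t j) : Replica) ∈ S.DecSet i :=
      S.toDec hji hiN (S.rowmem hj1 hjN hρj hserv.2.1 (le_refl _))
    have hvji : S.v i + 1 ≤ S.v j := by
      by_contra hcon
      have hh := S.rho_min_nat hi1 hiN hvj (by omega) htji
      rcases le_max_iff.1 hh with h | h <;> omega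
    have husj : S.v i + 1 ≤ S.us j := by
      by_contra hcon
      have hmem2 : ((S.v i, S.t j) : Replica) ∈ S.DecSet i :=
        S.toDec hji hiN (S.rowmem hj1 hjN hρj (by omega) (by omega))
      have hh := S.rho_min_nat hi1 hiN hmem2 (le_refl _) htji
      rcases le_max_iff.1 hh with h | h <;> omega
    obtain ⟨hc1, hc2, hc3⟩ := S.closest_nat hj1 hjN
    have hcsq : ((S.u' j, S.s' j) : Replica) ∈ SqRect (S.v j, S.t j) (5 * S.ρ j) := by
      simp only [SqRect, Set.mem_setOf_eq]
      refine ⟨by omega, by simpa using hc1, by omega, by simpa using hc2⟩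
    have husu : S.us j ≤ S.u' j :=
      S.serv_min j hj1 hjN _ (S.closest_mem j hj1 hjN) hcsq
    have hs'j : S.s' j + S.ρ j = S.t j := by
      rcases max_choice (S.v j - S.u' j) (S.t j - S.s' j) with h | h <;> omega
    exact ⟨⟨hj1, hji, hjN⟩, hρj, hρi, hvji, hx1, htji, hMEET, husj, husu, hc1, hs'j⟩
  obtain ⟨j0, hj0⟩ := hne
  have hρi : 1 ≤ S.ρ i := (CF j0 hj0).2.2.1
  -- ====================== v i ≥ ρ i ======================
  have HB : S.ρ i ≤ S.v i := by
    by_contra hcon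
    push_neg at hcon
    rcases le_or_gt (S.ρ i) (S.t i) with hti | hti
    · have hex : ∃ n, S.t i - S.ρ i < S.t n := ⟨i, by omega⟩
      have hPn₀ : S.t i - S.ρ i < S.t (Nat.find hex) := Nat.find_spec hex
      have hn₀i : Nat.find hex ≤ i := Nat.find_le (by omega)
      have hn₀1 : 1 ≤ Nat.find hex := by
        rcases Nat.eq_zero_or_pos (Nat.find hex) with h0 | h
        · exfalso
          have := hPn₀
          rw [h0, S.t_zero] at this
          omega
        · exact h
      have hprev : ¬ (S.t i - S.ρ i < S.t (Nat.find hex - 1)) :=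
        Nat.find_min hex (by omega)
      set n₀ := Nat.find hex with hn₀def
      have hmem : ((0, S.t n₀) : Replica) ∈ S.DecSet i := by
        rcases lt_or_eq_of_le hn₀i with h | h
        · refine S.toDec h hiN (vert_end (u := 0) (s := S.t (n₀ - 1)) (e := S.t n₀) ?_
            (hmono (n₀ - 1) n₀ (by omega) (by omega)) (le_refl _) (by omega))
          intro ed hed
          rw [S.step n₀ hn₀1 (by omega)]
          simp only [Finset.mem_union]; tauto
        · rw [h] at hprev hPn₀ ⊢
          show ((0, S.t i) : Replica) ∈ Repl (S.sol (i - 1) ∪ vertPath 0 (S.t (i - 1)) (S.t i))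
          exact vert_end (u := 0) (s := S.t (i - 1)) (e := S.t i)
            Finset.subset_union_right (hmono (i - 1) i (by omega) hiN) (le_refl _) (by omega)
      have hh := S.rho_min_nat hi1 hiN hmem (by omega) (hmono n₀ i hn₀i hiN)
      rcases le_max_iff.1 hh with h | h <;> omega
    · have h00 : ((0, 0) : Replica) ∈ S.DecSet i := (mem_Repl_iff _ _).2 (Or.inl rfl)
      have hh := S.rho_min_nat hi1 hiN h00 (by omega) (by omega)
      rcases le_max_iff.1 hh with h | h <;> omega
  -- ====================== closest replica of i ======================
  have hUi : ¬ (S.ρ i ≤ S.v i - S.us i) := hu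
  obtain ⟨hI1, hI2, hI3⟩ := S.closest_nat hi1 hiN
  have hIsq : ((S.u' i, S.s' i) : Replica) ∈ SqRect (S.v i, S.t i) (5 * S.ρ i) := by
    simp only [SqRect, Set.mem_setOf_eq]
    refine ⟨by omega, by simpa using hI1, by omega, by simpa using hI2⟩
  have hIus : S.us i ≤ S.u' i :=
    S.serv_min i hi1 hiN _ (S.closest_mem i hi1 hiN) hIsq
  have hIu : S.v i - S.u' i < S.ρ i := by omega
  have hIs : S.s' i + S.ρ i = S.t i := by
    rcases max_choice (S.v i - S.u' i) (S.t i - S.s' i) with h | h <;> omega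
  -- ====================== creator of c_i ======================
  have Dfact : ∃ m1, 1 ≤ m1 ∧ m1 < i ∧ m1 ≤ S.N ∧ S.t m1 + S.ρ i < S.t i ∧
      ((S.u' i, S.s' i) : Replica) ∈ Repl (S.sol m1) := by
    obtain ⟨m, hA, hB, hC, hD, hE, hF⟩ :=
      S.creator hi1 hiN (S.closest_mem i hi1 hiN) (by omega)
    have hserv := S.servfacts hA hC
    rcases hF with ⟨hb, hual, hav⟩ | ⟨haU, hsl, hsu⟩
    · exfalso
      have htr : ((S.us m, min (S.t i) (S.t m + 4 * S.ρ m)) : Replica) ∈ S.DecSet i :=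
        S.toDec hB hiN (S.trailmem hA hC hD (by omega) (by omega))
      have h1 := S.rho_min_nat hi1 hiN htr (by omega) (by omega)
      have husm : S.us m + S.ρ i ≤ S.v i := by
        rcases le_max_iff.1 h1 with h | h <;> omega
      have hrow : ((S.v i - S.ρ i, S.t m) : Replica) ∈ S.DecSet i :=
        S.toDec hB hiN (S.rowmem hA hC hD (by omega) (by omega))
      have hsq2 : ((S.v i - S.ρ i, S.t m) : Replica) ∈ SqRect (S.v i, S.t i) (5 * S.ρ i) := by
        simp only [SqRect, Set.mem_setOf_eq]
        refine ⟨by omega, by omega, by omega, by omega⟩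
      have := S.serv_min i hi1 hiN _ hrow hsq2
      omega
    · rcases le_or_gt (S.t m + 4 * S.ρ m + S.ρ i) (S.t i) with hT | hT
      · exact ⟨m, hA, hB, hC, by omega, hE⟩
      · exfalso
        have htr : ((S.us m, min (S.t i) (S.t m + 4 * S.ρ m)) : Replica) ∈ S.DecSet i :=
          S.toDec hB hiN (S.trailmem hA hC hD (by omega) (by omega))
        have h1 := S.rho_min_nat hi1 hiN htr (by omega) (by omega)
        rcases le_max_iff.1 h1 with h | h <;> omega
  -- ====================== per-child dichotomy ======================
  have GDS : ∀ k ∈ suns, S.t i + 5 * S.ρ k + 1 ≤ S.t k + S.ρ i ∨ 4 * S.ρ k + 3 ≤ S.ρ i := by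
    intro k hk
    obtain ⟨⟨hk1, hki, hkN⟩, hρk, -, hvk, hxk, htk, hMEETk, husk, husuk, hu'k, hs'k⟩ := CF k hk
    by_contra hcon
    push_neg at hcon
    obtain ⟨hD, hS⟩ := hcon
    obtain ⟨m1, hm11, hm1i, hm1N, hm1t, hm1mem⟩ := Dfact
    have hm1k : m1 < k := by
      by_contra hc
      have := hmono k m1 (by omega) hm1N
      omega
    have hcimem : ((S.u' i, S.s' i) : Replica) ∈ S.DecSet k := S.toDec hm1k hkN hm1mem
    have hsq : ((S.u' i, S.s' i) : Replica) ∈ SqRect (S.v k, S.t k) (5 * S.ρ k) := by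
      simp only [SqRect, Set.mem_setOf_eq]
      refine ⟨by omega, by omega, by omega, by omega⟩
    have := S.serv_min k hk1 hkN _ hcimem hsq
    omega
  -- ====================== universal separation ======================
  have SEP : ∀ k' ∈ suns, ∀ k ∈ suns, k' < k → S.t k' + 4 * S.ρ k' + S.ρ k ≤ S.t k := by
    intro k' hk' k hk hlt
    obtain ⟨⟨hk'1, hk'i, hk'N⟩, hρk', -, hvk', hxk', htk', hMEETk', husk', husuk', hu'k', hs'k'⟩ :=
      CF k' hk'
    obtain ⟨⟨hk1, hki, hkN⟩, hρk, -, hvk, hxk, htk, hMEETk, husk, husuk, hu'k, hs'k⟩ := CF k hk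
    have htkk' : S.t k' ≤ S.t k := hmono k' k (by omega) hkN
    have hservk' := S.servfacts hk'1 hk'N
    by_contra hns
    push_neg at hns
    rcases le_or_gt (S.us k') (S.v k) with hcase | hcase
    · -- serving column of k' is visible to k : dead-zone contradiction
      have htr : ((S.us k', min (S.t k' + 4 * S.ρ k') (S.t k)) : Replica) ∈ S.DecSet k :=
        S.toDec hlt hkN (S.trailmem hk'1 hk'N hρk' (by omega) (by omega))
      have h1 := S.rho_min_nat hk1 hkN htr hcase (by omega)
      rcases le_max_iff.1 h1 with h | h <;> omega
    · -- C2 : serving column of k' is to the right of k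
      have hST1 : S.t k' + S.ρ k ≤ S.t k := by
        by_contra hst
        push_neg at hst
        have hdisj := ((hsuns k').mp hk').2.2.2.2.2.2 k hlt hki ((hsuns k).mp hk).2.2.2.1
        refine hdisj ((S.v k - 1, S.t k'), (S.v k, S.t k')) ⟨⟨?_, ?_, ?_⟩, ?_, ?_, ?_⟩
        · exact Or.inl (by show ((S.v k, S.t k') : Replica) = (S.v k - 1 + 1, S.t k')
                           rw [Prod.ext_iff]; exact ⟨by omega, rfl⟩)
        · simp [SquareRun.req, qball]; omega
        · simp [SquareRun.req, qball]; omega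
        · exact Or.inl (by show ((S.v k, S.t k') : Replica) = (S.v k - 1 + 1, S.t k')
                           rw [Prod.ext_iff]; exact ⟨by omega, rfl⟩)
        · simp [SquareRun.req, qball]; omega
        · simp [SquareRun.req, qball]; omega
      -- the creation chain of the closest replica of k yields a contradiction
      have BAD : ∀ n, 1 ≤ n → n ≤ k → ∀ a b : ℕ, ((a, b) : Replica) ∈ S.DecSet n →
          S.v i < a → a ≤ S.v k → S.t k' ≤ b + 5 * S.ρ k' → b + S.ρ k ≤ S.t k → False := by
        intro n
        induction n using Nat.strong_induction_on with
        | _ n IHn =>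
          intro hn1 hnk
          have inner : ∀ d, ∀ a b : ℕ, ((a, b) : Replica) ∈ S.DecSet n →
              S.v i < a → a ≤ S.v k → S.t k' ≤ b + 5 * S.ρ k' → b + S.ρ k ≤ S.t k →
              S.t k - b ≤ d → False := by
            intro d
            induction d using Nat.strong_induction_on with
            | _ d IHd =>
              intro a b hmem hva hav htl htu hd
              obtain ⟨m, hA, hB, hC, hD, hE, hF⟩ := S.creator hn1 (by omega) hmem (by omega)
              have hservm := S.servfacts hA hC
              rcases Nat.lt_or_ge m k' with hmk' | hmk'
              · -- the replica was already there in round k' : inside its square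
                have htmk' : S.t m ≤ S.t k' := hmono m k' (by omega) hk'N
                have hsqmem : ∃ b', ((a, b') : Replica) ∈ S.DecSet k' ∧
                    S.t k' - 5 * S.ρ k' ≤ b' ∧ b' ≤ S.t k' := by
                  rcases le_or_gt b (S.t k') with hb | hb
                  · exact ⟨b, S.toDec hmk' hk'N hE, by omega, hb⟩
                  · rcases hF with ⟨hbt, -, -⟩ | ⟨haU, hsl, hsu⟩
                    · omega
                    · refine ⟨S.t k', ?_, by omega, le_refl _⟩
                      refine S.toDec hmk' hk'N ?_
                      rw [haU]
                      exact S.trailmem hA hC hD (by omega) (by omega)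
                obtain ⟨b', hbmem, hbl, hbu⟩ := hsqmem
                have hsq : ((a, b') : Replica) ∈ SqRect (S.v k', S.t k') (5 * S.ρ k') := by
                  simp only [SqRect, Set.mem_setOf_eq]
                  exact ⟨by omega, by omega, hbl, hbu⟩
                have := S.serv_min k' hk'1 hk'N _ hbmem hsq
                omega
              · -- creator after k'
                have htmk' : S.t k' ≤ S.t m := hmono k' m hmk' hC
                have htmk : S.t m ≤ S.t k := hmono m k (by omega) hkN
                rcases hF with ⟨hbt, hual, hav2⟩ | ⟨haU, hsl, hsu⟩
                · -- created by the horizontal row of m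
                  rcases le_or_gt (S.us m) (S.v i) with husm | husm
                  · -- row crosses column v i : contradiction with radius of i
                    have hrow : ((S.v i, S.t m) : Replica) ∈ S.DecSet i :=
                      S.toDec (by omega : m < i) hiN (S.rowmem hA hC hD husm (by omega))
                    have h1 := S.rho_min_nat hi1 hiN hrow (le_refl _) (by omega)
                    rcases le_max_iff.1 h1 with h | h <;> omega
                  · -- climb the SQ5 trail of m
                    rcases le_or_gt (S.t m + 4 * S.ρ m + S.ρ k) (S.t k) with hτ | hτ
                    · -- trail top still below the dead zone of k : recurse upwards
                      have htr2 : ((S.us m, S.t m + 4 * S.ρ m) : Replica) ∈ Repl (S.sol m) :=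
                        S.trailmem hA hC hD (by omega) (le_refl _)
                      exact IHd (S.t k - (S.t m + 4 * S.ρ m)) (by omega) (S.us m)
                        (S.t m + 4 * S.ρ m) (S.toDec hB (by omega) htr2) husm (by omega)
                        (by omega) (by omega) (le_refl _)
                    · -- trail enters the dead zone of k
                      have htr : ((S.us m, min (S.t m + 4 * S.ρ m) (S.t k)) : Replica)
                          ∈ S.DecSet k :=
                        S.toDec (by omega : m < k) hkN
                          (S.trailmem hA hC hD (by omega) (by omega))
                      have h1 := S.rho_min_nat hk1 hkN htr (by omega) (by omega)
                      rcases le_max_iff.1 h1 with h | h <;> omega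
                · -- created by a vertical trail of m, at column a = us m
                  rcases le_or_gt (S.t m + 4 * S.ρ m + S.ρ k) (S.t k) with hτ | hτ
                  · rcases lt_or_eq_of_le hsu with hbT | hbT
                    · -- climb to the top of the trail
                      have htr2 : ((S.us m, S.t m + 4 * S.ρ m) : Replica) ∈ Repl (S.sol m) :=
                        S.trailmem hA hC hD (by omega) (le_refl _)
                      exact IHd (S.t k - (S.t m + 4 * S.ρ m)) (by omega) a
                        (S.t m + 4 * S.ρ m) (by rw [haU]; exact S.toDec hB (by omega) htr2)
                        hva hav (by omega) (by omega) (le_refl _)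
                    · -- b is exactly the trail top : descend to the serving replica of m
                      have hρmk' : S.ρ m ≤ S.ρ k' := by omega
                      have hssmem : ((a, S.ss m) : Replica) ∈ S.DecSet m := by
                        rw [haU]; exact (S.serv_mem m hA hC).1
                      exact IHn m hB hA (by omega) a (S.ss m) hssmem hva hav
                        (by omega) (by omega)
                  · -- trail enters the dead zone of k
                    have htr : ((S.us m, min (S.t m + 4 * S.ρ m) (S.t k)) : Replica)
                        ∈ S.DecSet k :=
                      S.toDec (by omega : m < k) hkN
                        (S.trailmem hA hC hD (by omega) (by omega))
                    have h1 := S.rho_min_nat hk1 hkN htr (by omega) (by omega)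
                    rcases le_max_iff.1 h1 with h | h <;> omega
          intro a b hmem hva hav htl htu
          exact inner (S.t k - b) a b hmem hva hav htl htu (le_refl _)
      exact BAD k hk1 (le_refl k) (S.u' k) (S.s' k) (S.closest_mem k hk1 hkN)
        (by omega) hu'k (by omega) (by omega)
  -- ====================== telescoping the separation ======================
  have TEL : ∀ c : ℕ, ∀ s : Finset ℕ, s.card ≤ c → s ⊆ suns → ∀ hs : s.Nonempty,
      4 * ∑ j ∈ s, S.ρ j + S.t (s.min' hs) ≤ S.t (s.max' hs) + 4 * S.ρ (s.max' hs) := by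
    intro c
    induction c with
    | zero =>
      intro s hc _ hs
      exfalso
      have := Finset.card_pos.mpr hs
      omega
    | succ c IHc =>
      intro s hc hsub hs
      rcases eq_or_ne s.card 1 with h1 | h1
      · obtain ⟨a, rfl⟩ := Finset.card_eq_one.mp h1
        simp only [Finset.min'_singleton, Finset.max'_singleton, Finset.sum_singleton]
        omega
      · have hcard2 : 2 ≤ s.card := by
          have := Finset.card_pos.mpr hs
          omega
        have hams : s.min' hs ∈ s := s.min'_mem hs
        have hs2ne : (s.erase (s.min' hs)).Nonempty := by
          rw [← Finset.card_pos, Finset.card_erase_of_mem hams]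
          omega
        have hsub2 : s.erase (s.min' hs) ⊆ suns :=
          fun x hx => hsub (Finset.mem_of_mem_erase hx)
        have hc2 : (s.erase (s.min' hs)).card ≤ c := by
          rw [Finset.card_erase_of_mem hams]
          omega
        have IH2 := IHc (s.erase (s.min' hs)) hc2 hsub2 hs2ne
        have ha2s : (s.erase (s.min' hs)).min' hs2ne ∈ s.erase (s.min' hs) :=
          Finset.min'_mem _ hs2ne
        have ha2ne : (s.erase (s.min' hs)).min' hs2ne ≠ s.min' hs :=
          (Finset.mem_erase.mp ha2s).1
        have ha2mem : (s.erase (s.min' hs)).min' hs2ne ∈ s := Finset.mem_of_mem_erase ha2s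
        have haa2 : s.min' hs < (s.erase (s.min' hs)).min' hs2ne :=
          lt_of_le_of_ne (s.min'_le _ ha2mem) (Ne.symm ha2ne)
        have hmaxs : s.max' hs ∈ s.erase (s.min' hs) := by
          refine Finset.mem_erase.mpr ⟨?_, s.max'_mem hs⟩
          have := Finset.min'_lt_max'_of_card s (by omega)
          omega
        have hmax_eq : (s.erase (s.min' hs)).max' hs2ne = s.max' hs := by
          apply le_antisymm
          · exact Finset.max'_le _ _ _
              (fun y hy => Finset.le_max' s y (Finset.mem_of_mem_erase hy))
          · exact Finset.le_max' _ _ hmaxs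
        have hsum : ∑ j ∈ s, S.ρ j = S.ρ (s.min' hs) + ∑ j ∈ s.erase (s.min' hs), S.ρ j :=
          (Finset.add_sum_erase s (fun j => S.ρ j) hams).symm
        have hSEP := SEP (s.min' hs) (hsub hams) ((s.erase (s.min' hs)).min' hs2ne)
          (hsub ha2mem) haa2
        rw [hmax_eq] at IH2
        omega
  -- ====================== conclusion ======================
  have hMxm : suns.max' ⟨j0, hj0⟩ ∈ suns := suns.max'_mem _
  have hMnm : suns.min' ⟨j0, hj0⟩ ∈ suns := suns.min'_mem _
  have hTEL := TEL suns.card suns le_rfl (fun x hx => hx) ⟨j0, hj0⟩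
  have hG := GDS _ hMxm
  obtain ⟨-, -, -, -, -, -, hMEETn, -, -, -, -⟩ := CF _ hMnm
  obtain ⟨-, -, -, -, -, htMx, -, -, -, -, -⟩ := CF _ hMxm
  rcases hG with hG | hG <;> omega
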